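/- Let (X, ω) be a compact Kähler manifold of dimension n, m ∈ {1,…,n}, and c ∈ H^{1,1}_BC(X,ℝ) a real Bott-Chern class. Suppose there exist a smooth d-closed real (1,1)-form α ∈ c and a smooth real (n-m,n-m)-form Ω₀ with Ω₀ > 0 (weakly) and ∂∂̄Ω₀ = 0 such that α ∧ ω^{m-1} ∧ Ω₀ > 0 at every point of X. Then −c is not [ω]-m-pseudo-effective, i.e. there is no real (m-1,m-1)-current S with (−α) ∧ ω^{m-1}/(m-1)! + i∂∂̄S ≥ 0 strongly. -/
import Mathlib


/-- The implication (a) ⟹ (b) of Theorem 1.3 / Theorem 2.10, stated abstractly: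
on a compact Kähler manifold `(X, ω)` of dimension `n` with `m ∈ {1,…,n}`, let
`F` be the space of smooth real `(n-m,n-m)`-forms with weakly-positive cone
`PosW`, let `G` be the space of real `(n-m+1,n-m+1)`-forms and
`ddbarOp : Ω ↦ ∂∂̄Ω`, let `Fnc` be the space of functions with the cone
`posFn` of everywhere-positive functions — integration `IntF` is positive on
`posFn` since `X` is compact — and let `dens : Ω ↦ (α ∧ ω^{m-1} ∧ Ω)/dV_ω` be
the density of the pairing against a smooth `d`-closed real `(1,1)`-form
`α ∈ c`.  Suppose there is `Ω₀ ∈ PosW` with `∂∂̄Ω₀ = 0` and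
`α ∧ ω^{m-1} ∧ Ω₀ > 0` at every point of `X` (i.e. `dens Ω₀ ∈ posFn`).  Then
`−c` is not `[ω]`-`m`-pseudo-effective: there is no real `(m-1,m-1)`-current
`S` (acting on `∂∂̄Ω` as a functional on `G`) with
`(−α) ∧ ω^{m-1}/(m-1)! + i∂∂̄S ≥ 0` strongly, i.e. with
`−(1/(m-1)!)·∫_X α ∧ ω^{m-1} ∧ Ω + S(∂∂̄Ω) ≥ 0` for all `Ω ∈ PosW`. -/
theorem stmt_17 {F G Fnc : Type*} [AddCommGroup F] [Module ℝ F]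
    [AddCommGroup G] [Module ℝ G] [AddCommGroup Fnc] [Module ℝ Fnc]
    (n m : ℕ) (hm : 1 ≤ m) (hmn : m ≤ n)
    (PosW : Set F) (ddbarOp : F →ₗ[ℝ] G)
    (posFn : Set Fnc) (IntF : Fnc →ₗ[ℝ] ℝ)
    (hIntPos : ∀ f ∈ posFn, 0 < IntF f)
    (dens : F →ₗ[ℝ] Fnc)
    (Ω₀ : F) (hΩ₀pos : Ω₀ ∈ PosW) (hΩ₀dd : ddbarOp Ω₀ = 0)
    (hptwise : dens Ω₀ ∈ posFn) :
    ¬ ∃ S : G →ₗ[ℝ] ℝ, ∀ Ω ∈ PosW,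
      0 ≤ -((Nat.factorial (m - 1) : ℝ)⁻¹ * IntF (dens Ω)) + S (ddbarOp Ω) := by
  rintro ⟨S, hS⟩
  have h := hS Ω₀ hΩ₀pos
  rw [hΩ₀dd, map_zero, add_zero] at h
  have hpos : 0 < (Nat.factorial (m - 1) : ℝ)⁻¹ * IntF (dens Ω₀) := by
    exact mul_pos (by positivity) (hIntPos _ hptwise)
  linarith
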